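/- arXiv:1706.02474 — 3 statements merged into one kernel-verified Lean document; each statement's English description precedes it below -/
import Mathlib

section
/- Let P be a finite set of points in the plane and suppose at least 4 points of P lie on the boundary of the smallest enclosing circle C(P). Then there exists a boundary point p ∈ P such that the smallest enclosing circle of P \ {p} still equals C(P). -/
noncomputable section

abbrev Plane := EuclideanSpace ℝ (Fin 2)

/-- `IsSEC P c ρ` : the closed disk of center `c` and radius `ρ` contains `P`
and has minimal radius among all closed disks containing `P`. -/
def IsSEC (P : Set Plane) (c : Plane) (ρ : ℝ) : Prop :=
  P ⊆ Metric.closedBall c ρ ∧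
    ∀ (c' : Plane) (ρ' : ℝ), P ⊆ Metric.closedBall c' ρ' → ρ ≤ ρ'

open RealInnerProductSpace Finset

set_option maxHeartbeats 1000000 in
theorem exists_noncritical_boundary_point (P : Set Plane) (hfin : P.Finite)
    (c : Plane) (ρ : ℝ) (hSEC : IsSEC P c ρ)
    (hbd : 4 ≤ {x ∈ P | dist x c = ρ}.ncard) :
    ∃ p ∈ P, dist p c = ρ ∧ IsSEC (P \ {p}) c ρ := by
  classical
  obtain ⟨hsub, hmin⟩ := hSEC
  set B : Set Plane := {x ∈ P | dist x c = ρ} with hB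
  have hBfin : B.Finite := hfin.subset (fun x hx => hx.1)
  have hBP : B ⊆ P := fun x hx => hx.1
  -- ρ is positive
  have h2 : 1 < B.ncard := by omega
  obtain ⟨a, b, ha, hb, hab⟩ := (Set.one_lt_ncard_iff hBfin).1 h2
  have hρpos : 0 < ρ := by
    have h1 : dist a b ≤ dist a c + dist c b := dist_triangle a c b
    have h2 : dist c b = ρ := by rw [dist_comm]; exact hb.2
    have h3 : 0 < dist a b := dist_pos.2 hab
    have := ha.2
    linarith
  -- the center lies in the convex hull of the boundary points
  have hc : c ∈ convexHull ℝ B := by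
    by_contra hc
    obtain ⟨f, u, hfu, huc⟩ := geometric_hahn_banach_closed_point
      (convex_convexHull ℝ B) (hBfin.isClosed_convexHull (𝕜 := ℝ)) hc
    obtain ⟨v, hv⟩ := (InnerProductSpace.toDual ℝ Plane).surjective f
    have hfv : ∀ x : Plane, f x = ⟪v, x⟫ := by
      intro x; rw [← hv]; rfl
    set ε : ℝ := f c - u with hε
    have hεpos : 0 < ε := by simp [hε]; linarith
    have hvne : v ≠ 0 := by
      intro h
      have h1 : f a < u := hfu a (subset_convexHull ℝ B ha)
      have h2 : f a = 0 := by rw [hfv a, h, inner_zero_left]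
      have h3 : f c = 0 := by rw [hfv c, h, inner_zero_left]
      rw [h2] at h1
      rw [h3] at huc
      linarith
    have hvpos : 0 < ‖v‖ := norm_pos_iff.2 hvne
    -- uniform bound for non-boundary points
    set F : Finset Plane := hfin.toFinset with hF
    set N : Finset Plane := insert c (F.filter (fun x => dist x c ≠ ρ)) with hN
    have hNne : N.Nonempty := insert_nonempty _ _
    set m : ℝ := N.sup' hNne (fun x => dist x c) with hm
    have hmρ : m < ρ := by
      rw [hm, Finset.sup'_lt_iff]
      intro x hx
      rcases Finset.mem_insert.1 hx with h | h
      · simp [h, hρpos]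
      · obtain ⟨hxP, hxne⟩ := Finset.mem_filter.1 h
        have : dist x c ≤ ρ := hsub (hfin.mem_toFinset.1 hxP)
        exact lt_of_le_of_ne this hxne
    set t : ℝ := min (ε / ‖v‖ ^ 2) ((ρ - m) / (2 * ‖v‖)) with ht
    have htpos : 0 < t := by
      apply lt_min
      · positivity
      · apply div_pos (by linarith) (by positivity)
    set c' : Plane := c - t • v with hc'
    have hdcc' : dist c c' = t * ‖v‖ := by
      rw [dist_eq_norm, hc']
      simp [norm_smul, abs_of_pos htpos]
    have hball : ∀ x ∈ P, dist x c' < ρ := by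
      intro x hxP
      by_cases hxB : dist x c = ρ
      · -- boundary point
        have hfx : f x < u := hfu x (subset_convexHull ℝ B ⟨hxP, hxB⟩)
        have hinner : ⟪x - c, t • v⟫ < -(t * ε) := by
          rw [real_inner_smul_right]
          have : ⟪x - c, v⟫ = f x - f c := by
            rw [inner_sub_left, hfv x, hfv c, real_inner_comm x v, real_inner_comm c v]
          rw [this]
          have h1 : f x - f c < -ε := by simp [hε]; linarith
          calc t * (f x - f c) < t * (-ε) := by
                exact (mul_lt_mul_iff_right₀ htpos).2 h1
            _ = -(t * ε) := by ring
        have hsq : dist x c' ^ 2 < ρ ^ 2 := by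
          have hxe : x - c' = (x - c) + t • v := by rw [hc']; abel
          have : dist x c' ^ 2 = ‖x - c‖ ^ 2 + 2 * ⟪x - c, t • v⟫ + ‖t • v‖ ^ 2 := by
            rw [dist_eq_norm, hxe, norm_add_sq_real]
          rw [this]
          have h1 : ‖x - c‖ = ρ := by rw [← dist_eq_norm]; exact hxB
          have h2 : ‖t • v‖ ^ 2 = t ^ 2 * ‖v‖ ^ 2 := by
            rw [norm_smul, Real.norm_eq_abs, abs_of_pos htpos]; ring
          have h3 : t * ‖v‖ ^ 2 ≤ ε := by
            have := min_le_left (ε / ‖v‖ ^ 2) ((ρ - m) / (2 * ‖v‖))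
            rw [← ht] at this
            calc t * ‖v‖ ^ 2 ≤ (ε / ‖v‖ ^ 2) * ‖v‖ ^ 2 := by
                  apply mul_le_mul_of_nonneg_right this (by positivity)
              _ = ε := by field_simp
          nlinarith [htpos, hinner]
        nlinarith [dist_nonneg (x := x) (y := c'), hρpos]
      · -- interior point
        have hxN : x ∈ N := Finset.mem_insert_of_mem
          (Finset.mem_filter.2 ⟨hfin.mem_toFinset.2 hxP, hxB⟩)
        have h1 : dist x c ≤ m := Finset.le_sup' (fun x => dist x c) hxN
        have h2 : t * ‖v‖ ≤ (ρ - m) / 2 := by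
          have := min_le_right (ε / ‖v‖ ^ 2) ((ρ - m) / (2 * ‖v‖))
          rw [← ht] at this
          calc t * ‖v‖ ≤ ((ρ - m) / (2 * ‖v‖)) * ‖v‖ :=
                mul_le_mul_of_nonneg_right this (le_of_lt hvpos)
            _ = (ρ - m) / 2 := by field_simp
        calc dist x c' ≤ dist x c + dist c c' := dist_triangle x c c'
          _ = dist x c + t * ‖v‖ := by rw [hdcc']
          _ ≤ m + (ρ - m) / 2 := by linarith
          _ < ρ := by linarith
    have hFne : F.Nonempty := ⟨a, hfin.mem_toFinset.2 (hBP ha)⟩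
    set ρ'' : ℝ := F.sup' hFne (fun x => dist x c') with hρ''
    have h1 : ρ'' < ρ := by
      rw [hρ'', Finset.sup'_lt_iff]
      intro x hx
      exact hball x (hfin.mem_toFinset.1 hx)
    have h2 : P ⊆ Metric.closedBall c' ρ'' := by
      intro x hx
      rw [Metric.mem_closedBall]
      exact Finset.le_sup' (fun x => dist x c') (hfin.mem_toFinset.2 hx)
    have := hmin c' ρ'' h2
    linarith
  -- Carathéodory: c is in the hull of at most 3 boundary points
  rw [convexHull_eq_union] at hc
  simp only [Set.mem_iUnion] at hc
  obtain ⟨s, hsB, hai, hcs⟩ := hc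
  have hcard : s.card ≤ 3 := by
    have h1 := hai.card_le_finrank_succ
    have h2 : Module.finrank ℝ (vectorSpan ℝ (Set.range ((↑) : s → Plane))) ≤ 2 := by
      have := Submodule.finrank_le (vectorSpan ℝ (Set.range ((↑) : s → Plane)))
      rwa [finrank_euclideanSpace_fin] at this
    rw [Fintype.card_coe] at h1
    omega
  -- find a boundary point not among them
  have hex : ∃ p ∈ B, p ∉ s := by
    by_contra h
    push_neg at h
    have hBs : B ⊆ (↑s : Set Plane) := h
    have := Set.ncard_le_ncard hBs s.finite_toSet
    rw [Set.ncard_coe_finset] at this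
    omega
  obtain ⟨p, hpB, hps⟩ := hex
  refine ⟨p, hpB.1, hpB.2, fun x hx => hsub hx.1, ?_⟩
  -- minimality for P \ {p}
  intro c₂ ρ₂ hsub₂
  have hsP : (↑s : Set Plane) ⊆ P \ {p} := by
    intro x hx
    exact ⟨hBP (hsB hx), fun hxp => hps (hxp ▸ hx)⟩
  have hsne : s.Nonempty := by
    rcases s.eq_empty_or_nonempty with h | h
    · rw [h] at hcs; simp at hcs
    · exact h
  obtain ⟨q, hq⟩ := hsne
  have hρ₂nn : 0 ≤ ρ₂ := le_trans dist_nonneg (hsub₂ (hsP hq))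
  -- weights
  rw [Finset.convexHull_eq] at hcs
  obtain ⟨w, hw0, hw1, hwc⟩ := hcs
  have hcm : ∑ y ∈ s, w y • y = c := by
    have h := Finset.centerMass_eq_of_sum_1 s id hw1 (w := w)
    simp only [id] at h
    rw [← h]
    exact hwc
  have hzero : ∑ y ∈ s, w y • (y - c) = 0 := by
    have : ∑ y ∈ s, w y • (y - c) = (∑ y ∈ s, w y • y) - (∑ y ∈ s, w y) • c := by
      rw [Finset.sum_smul, ← Finset.sum_sub_distrib]
      congr 1; ext y; rw [smul_sub]
    rw [this, hcm, hw1, one_smul, sub_self]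
  have hinner0 : ∑ y ∈ s, w y * ⟪y - c, c - c₂⟫ = 0 := by
    calc ∑ y ∈ s, w y * ⟪y - c, c - c₂⟫
        = ∑ y ∈ s, ⟪w y • (y - c), c - c₂⟫ := by
          apply Finset.sum_congr rfl; intro y _; rw [real_inner_smul_left]
      _ = ⟪∑ y ∈ s, w y • (y - c), c - c₂⟫ := (sum_inner s _ _).symm
      _ = 0 := by rw [hzero, inner_zero_left]
  have hkey : ρ ^ 2 ≤ ρ₂ ^ 2 := by
    have hexp : ∀ y ∈ s, dist y c₂ ^ 2
        = ρ ^ 2 + 2 * ⟪y - c, c - c₂⟫ + ‖c - c₂‖ ^ 2 := by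
      intro y hy
      have hye : y - c₂ = (y - c) + (c - c₂) := by abel
      have hd : dist y c = ρ := (hsB hy).2
      rw [dist_eq_norm, hye, norm_add_sq_real, ← dist_eq_norm, hd]
    have hsum : ∑ y ∈ s, w y * dist y c₂ ^ 2 = ρ ^ 2 + ‖c - c₂‖ ^ 2 := by
      calc ∑ y ∈ s, w y * dist y c₂ ^ 2
          = ∑ y ∈ s, (w y * ρ ^ 2 + 2 * (w y * ⟪y - c, c - c₂⟫) + w y * ‖c - c₂‖ ^ 2) := by
            apply Finset.sum_congr rfl; intro y hy; rw [hexp y hy]; ring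
        _ = (∑ y ∈ s, w y) * ρ ^ 2 + 2 * (∑ y ∈ s, w y * ⟪y - c, c - c₂⟫)
              + (∑ y ∈ s, w y) * ‖c - c₂‖ ^ 2 := by
            rw [Finset.sum_add_distrib, Finset.sum_add_distrib, ← Finset.mul_sum,
              Finset.sum_mul, Finset.sum_mul]
        _ = ρ ^ 2 + ‖c - c₂‖ ^ 2 := by rw [hw1, hinner0]; ring
    have hle : ∑ y ∈ s, w y * dist y c₂ ^ 2 ≤ ∑ y ∈ s, w y * ρ₂ ^ 2 := by
      apply Finset.sum_le_sum
      intro y hy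
      apply mul_le_mul_of_nonneg_left _ (hw0 y hy)
      have := hsub₂ (hsP hy)
      rw [Metric.mem_closedBall] at this
      exact pow_le_pow_left₀ dist_nonneg this 2
    rw [hsum] at hle
    rw [← Finset.sum_mul, hw1, one_mul] at hle
    nlinarith [sq_nonneg ‖c - c₂‖]
  nlinarith [hρpos, hρ₂nn]
end
end

section
/- Let φ be an isometry of the Euclidean plane with a unique fixed point x (a nontrivial rotation). If φ maps a finite nonempty set P of points onto itself, then x = c(P), the center of the smallest enclosing circle of P. -/
noncomputable section

theorem rotation_center_eq_sec_center (P : Set Plane) (hfin : P.Finite) (hne : P.Nonempty)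
    (φ : Plane ≃ᵢ Plane) (x : Plane)
    (hfix : φ x = x) (huniq : ∀ y, φ y = y → y = x)
    (hφ : φ '' P = P)
    (c : Plane) (ρ : ℝ) (hSEC : IsSEC P c ρ) :
    x = c := by
  obtain ⟨hcov, hmin⟩ := hSEC
  obtain ⟨p0, hp0⟩ := hne
  have hρ0 : 0 ≤ ρ := le_trans dist_nonneg (hcov hp0)
  -- φ c is also a center of radius ρ
  have hcov' : P ⊆ Metric.closedBall (φ c) ρ := by
    intro p hp
    rw [← hφ] at hp
    obtain ⟨q, hq, rfl⟩ := hp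
    simpa [Metric.mem_closedBall, φ.dist_eq] using hcov hq
  -- midpoint argument
  set m := midpoint ℝ c (φ c) with hm
  set d : ℝ := dist c (φ c) / 2 with hd
  have hd0 : 0 ≤ d := by positivity
  have hmid : ∀ p ∈ P, dist p m ^ 2 ≤ ρ ^ 2 - d ^ 2 := by
    intro p hp
    have h1 := hcov hp
    have h2 := hcov' hp
    simp only [Metric.mem_closedBall] at h1 h2
    have hap := EuclideanGeometry.dist_sq_add_dist_sq_eq_two_mul_dist_midpoint_sq_add_half_dist_sq
      p c (φ c)
    have hb1 : dist p c ^ 2 ≤ ρ ^ 2 := by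
      apply sq_le_sq' <;> nlinarith [dist_nonneg (x := p) (y := c)]
    have hb2 : dist p (φ c) ^ 2 ≤ ρ ^ 2 := by
      apply sq_le_sq' <;> nlinarith [dist_nonneg (x := p) (y := φ c)]
    rw [← hm, ← hd] at hap
    nlinarith
  have hρ2d : ρ ^ 2 - d ^ 2 ≥ 0 := le_trans (sq_nonneg _) (hmid p0 hp0)
  have hcovm : P ⊆ Metric.closedBall m (Real.sqrt (ρ ^ 2 - d ^ 2)) := by
    intro p hp
    rw [Metric.mem_closedBall]
    have := hmid p hp
    nlinarith [Real.sq_sqrt hρ2d, Real.sqrt_nonneg (ρ ^ 2 - d ^ 2), dist_nonneg (x := p) (y := m),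
      sq_nonneg (dist p m - Real.sqrt (ρ ^ 2 - d ^ 2))]
  have hle := hmin m _ hcovm
  have hsq : ρ ^ 2 ≤ ρ ^ 2 - d ^ 2 := by
    nlinarith [Real.sq_sqrt hρ2d, Real.sqrt_nonneg (ρ ^ 2 - d ^ 2)]
  have hdz : d = 0 := by nlinarith
  have : φ c = c := by
    have : dist c (φ c) = 0 := by rw [hd] at hdz; linarith
    exact (dist_eq_zero.mp this).symm
  exact (huniq c this).symm
end
end

section
/- For every finite nonempty set P of points in the plane, the center of the smallest enclosing circle of P lies in the convex hull of P. -/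
noncomputable section

open RealInnerProductSpace in
theorem sec_center_mem_convexHull (P : Set Plane) (hfin : P.Finite) (hne : P.Nonempty)
    (c : Plane) (ρ : ℝ) (hSEC : IsSEC P c ρ) :
    c ∈ convexHull ℝ P := by
  by_contra hc
  set K := convexHull ℝ P with hK
  have hKconv : Convex ℝ K := convex_convexHull ℝ P
  have hKcomp : IsCompact K := hfin.isCompact_convexHull (𝕜 := ℝ)
  have hKne : K.Nonempty := hne.mono (subset_convexHull ℝ P)
  obtain ⟨c', hc'K, hc'min⟩ :=
    exists_norm_eq_iInf_of_complete_convex hKne hKcomp.isComplete hKconv (u := c)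
  have hinner : ∀ w ∈ K, ⟪c - c', w - c'⟫ ≤ 0 :=
    (norm_eq_iInf_iff_real_inner_le_zero hKconv hc'K).mp hc'min
  have hd : 0 < ‖c - c'‖ := by
    rw [norm_pos_iff, sub_ne_zero]
    rintro rfl; exact hc hc'K
  set d := ‖c - c'‖
  -- key estimate
  have key : ∀ p ∈ P, dist p c' ^ 2 ≤ ρ ^ 2 - d ^ 2 := by
    intro p hp
    have hpK : p ∈ K := subset_convexHull ℝ P hp
    have h1 : ⟪c - c', p - c'⟫ ≤ 0 := hinner p hpK
    have h2 : ‖p - c‖ ^ 2 = ‖p - c'‖ ^ 2 - 2 * ⟪c - c', p - c'⟫ + d ^ 2 := by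
      have : p - c = (p - c') - (c - c') := by abel
      rw [this, norm_sub_sq_real]
      ring_nf
      rw [real_inner_comm]
    have h3 : dist p c ≤ ρ := by
      have := hSEC.1 hp
      rwa [Metric.mem_closedBall] at this
    have h4 : ‖p - c‖ ^ 2 ≤ ρ ^ 2 := by
      rw [← dist_eq_norm]
      have h0 : (0:ℝ) ≤ dist p c := dist_nonneg
      nlinarith
    rw [dist_eq_norm]
    nlinarith
  obtain ⟨p0, hp0⟩ := hne
  have hρd : 0 ≤ ρ ^ 2 - d ^ 2 := le_trans (by positivity) (key p0 hp0)
  set ρ' := Real.sqrt (ρ ^ 2 - d ^ 2) with hρ'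
  have hsub : P ⊆ Metric.closedBall c' ρ' := by
    intro p hp
    rw [Metric.mem_closedBall]
    have := key p hp
    have h0 : (0:ℝ) ≤ dist p c' := dist_nonneg
    have : dist p c' ≤ Real.sqrt (ρ ^ 2 - d ^ 2) := by
      rw [show dist p c' = Real.sqrt (dist p c' ^ 2) by
        rw [Real.sqrt_sq h0]]
      exact Real.sqrt_le_sqrt (key p hp)
    exact this
  have hle : ρ ≤ ρ' := hSEC.2 c' ρ' hsub
  have hρ0 : 0 ≤ ρ := by
    have := hSEC.1 hp0
    rw [Metric.mem_closedBall] at this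
    exact le_trans dist_nonneg this
  have : ρ ^ 2 ≤ ρ ^ 2 - d ^ 2 := by
    have := Real.sq_sqrt hρd
    nlinarith
  nlinarith
end
end
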